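/- Let N be a finite set with |N| = n ≥ 2. For any two simple graphs x and y on the vertex set N with identical degree distributions (n_j(x) = n_j(y) for all j ≥ 0), the number of subgraphs of x isomorphic to the complete graph K_{n−1} on n−1 vertices equals the number of subgraphs of y isomorphic to K_{n−1}. That is, σ_{K_{n−1}}(x) is a function of the degree distribution of x alone. -/

import Mathlib

/-- The number of (not necessarily induced) subgraphs of `x` isomorphic to `U`. -/
noncomputable def subCount {W V : Type*} (U : SimpleGraph W) (x : SimpleGraph V) : ℕ :=
  Nat.card {H : x.Subgraph // Nonempty (H.coe ≃g U)}

/-- The `k`-star: the vertex `0` (the hub) is adjacent to the `k` other vertices,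
and there are no other edges. -/
def starGraph (k : ℕ) : SimpleGraph (Fin (k + 1)) where
  Adj a b := a ≠ b ∧ (a = 0 ∨ b = 0)
  symm := by
    constructor
    rintro a b ⟨hne, h⟩
    exact ⟨hne.symm, h.symm⟩
  loopless := by
    constructor
    rintro a ⟨hne, _⟩
    exact hne rfl

/-- The disjoint union of two edges: four vertices and two edges sharing no endpoint. -/
def twoEdges : SimpleGraph (Fin 4) :=
  SimpleGraph.fromRel (fun a b => (a = 0 ∧ b = 1) ∨ (a = 2 ∧ b = 3))

/-- The complete graph on `m` vertices with one edge (between `0` and `1`) removed. -/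
def compMinusEdge (m : ℕ) : SimpleGraph (Fin m) :=
  (⊤ : SimpleGraph (Fin m)) \ SimpleGraph.fromRel (fun a b => a.val = 0 ∧ b.val = 1)

/-- The degree of the vertex `v` in the graph `x`. -/
noncomputable def deg {V : Type*} (x : SimpleGraph V) (v : V) : ℕ :=
  Nat.card {w : V // x.Adj v w}

/-- `nDeg x j` is the number of vertices of `x` having degree `j`
(the degree distribution of `x`). -/
noncomputable def nDeg {V : Type*} (x : SimpleGraph V) (j : ℕ) : ℕ :=
  Nat.card {v : V // deg x v = j}

open SimpleGraph Finset

section Aux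

variable {V : Type*} [Fintype V] [DecidableEq V]

omit [DecidableEq V] in
lemma deg_eq_degree (x : SimpleGraph V) [DecidableRel x.Adj] (v : V) :
    deg x v = x.degree v := by
  have h : deg x v = Nat.card (x.neighborSet v) := rfl
  rw [h, Nat.card_coe_set_eq, Set.ncard_eq_toFinset_card', degree, neighborFinset_def]

omit [DecidableEq V] in
lemma nDeg_eq (x : SimpleGraph V) [DecidableRel x.Adj] (j : ℕ) :
    nDeg x j = (univ.filter (fun v => x.degree v = j)).card := by
  classical
  rw [nDeg, Nat.card_congr (Equiv.subtypeEquivRight (fun v => by rw [deg_eq_degree])),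
    Nat.card_eq_fintype_card, Fintype.card_subtype]

/-- the subgraph of `x` on all vertices except `v`, complete there. -/
def mySub (x : SimpleGraph V) (v : V) (hv : ∀ a b, a ≠ v → b ≠ v → a ≠ b → x.Adj a b) :
    x.Subgraph where
  verts := {a | a ≠ v}
  Adj a b := a ≠ b ∧ a ≠ v ∧ b ≠ v
  adj_sub := fun ⟨hab, ha, hb⟩ => hv _ _ ha hb hab
  edge_vert := fun ⟨_, ha, _⟩ => ha
  symm := ⟨fun _ _ ⟨hab, ha, hb⟩ => ⟨hab.symm, hb, ha⟩⟩

lemma mySub_iso (x : SimpleGraph V) (v : V)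
    (hv : ∀ a b, a ≠ v → b ≠ v → a ≠ b → x.Adj a b) :
    Nonempty ((mySub x v hv).coe ≃g (⊤ : SimpleGraph (Fin (Fintype.card V - 1)))) := by
  have hc : Fintype.card {a : V // a ≠ v} = Fintype.card (Fin (Fintype.card V - 1)) := by
    have h1 := Fintype.card_subtype_compl (fun a : V => a = v)
    simp only [Fintype.card_subtype_eq, Fintype.card_fin] at h1 ⊢
    exact h1
  obtain ⟨e1⟩ := Fintype.card_eq.mp hc
  have e0 : ↥((mySub x v hv).verts) ≃ {a : V // a ≠ v} := Equiv.refl _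
  let e := e0.trans e1
  refine ⟨⟨e, ?_⟩⟩
  intro a b
  rw [top_adj, Subgraph.coe_adj]
  show e a ≠ e b ↔ ((a : V) ≠ (b : V) ∧ (a : V) ≠ v ∧ (b : V) ≠ v)
  constructor
  · intro h
    exact ⟨fun hh => h (congrArg e (Subtype.ext hh)), a.2, b.2⟩
  · rintro ⟨hab, -, -⟩ h
    exact hab (congrArg Subtype.val (e.injective h))

lemma subCount_eq (hn : 2 ≤ Fintype.card V) (x : SimpleGraph V) :
    subCount (⊤ : SimpleGraph (Fin (Fintype.card V - 1))) x
      = Nat.card {v : V // ∀ a b, a ≠ v → b ≠ v → a ≠ b → x.Adj a b} := by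
  classical
  set m := Fintype.card V - 1 with hm
  let f : {v : V // ∀ a b, a ≠ v → b ≠ v → a ≠ b → x.Adj a b} →
      {H : x.Subgraph // Nonempty (H.coe ≃g (⊤ : SimpleGraph (Fin m)))} :=
    fun p => ⟨mySub x p.1 p.2, mySub_iso x p.1 p.2⟩
  have hinj : Function.Injective f := by
    rintro ⟨v, hv⟩ ⟨w, hw⟩ h
    have hverts : (mySub x v hv).verts = (mySub x w hw).verts :=
      congrArg SimpleGraph.Subgraph.verts (congrArg Subtype.val h)
    apply Subtype.ext
    by_contra hvw
    have hne : w ≠ v := fun h' => hvw h'.symm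
    have hwmem : w ∈ (mySub x v hv).verts := hne
    rw [hverts] at hwmem
    exact hwmem rfl
  have hsurj : Function.Surjective f := by
    rintro ⟨H, ⟨e⟩⟩
    have hcard : H.verts.ncard = m := by
      rw [← Nat.card_coe_set_eq, Nat.card_congr e.toEquiv]
      simp
    have hne : H.verts ≠ Set.univ := by
      intro h
      rw [h, Set.ncard_univ, Nat.card_eq_fintype_card] at hcard
      omega
    obtain ⟨v, hv⟩ : ∃ v, v ∉ H.verts := by
      by_contra h
      push_neg at h
      exact hne (Set.eq_univ_of_forall h)
    have hsub : H.verts ⊆ {a | a ≠ v} := fun a ha h => hv (h ▸ ha)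
    have hvertseq : H.verts = {a | a ≠ v} := by
      refine Set.eq_of_subset_of_ncard_le hsub ?_ (Set.toFinite _)
      rw [hcard]
      have h2 : ({a | a ≠ v} : Set V).ncard = Fintype.card V - 1 := by
        rw [← Nat.card_coe_set_eq, Nat.card_eq_fintype_card]
        have h1 := Fintype.card_subtype_compl (fun a : V => a = v)
        rw [Fintype.card_subtype_eq] at h1
        rw [← h1]
        exact Fintype.card_congr' rfl
      omega
    have hmem : ∀ a, a ∈ H.verts ↔ a ≠ v := Set.ext_iff.mp hvertseq
    have hadj : ∀ a b, a ∈ H.verts → b ∈ H.verts → a ≠ b → H.Adj a b := by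
      intro a b ha hb hab
      have h : H.coe.Adj ⟨a, ha⟩ ⟨b, hb⟩ := by
        rw [← e.map_rel_iff, top_adj]
        intro h
        exact hab (congrArg Subtype.val (e.injective h))
      exact h
    have hP : ∀ a b, a ≠ v → b ≠ v → a ≠ b → x.Adj a b := fun a b ha hb hab =>
      H.adj_sub (hadj a b ((hmem a).mpr ha) ((hmem b).mpr hb) hab)
    refine ⟨⟨v, hP⟩, Subtype.ext ?_⟩
    show mySub x v hP = H
    apply SimpleGraph.Subgraph.ext
    · exact hvertseq.symm
    · funext a b
      apply propext
      constructor
      · rintro ⟨hab, ha, hb⟩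
        exact hadj a b ((hmem a).mpr ha) ((hmem b).mpr hb) hab
      · intro hab
        exact ⟨(H.adj_sub hab).ne, (hmem a).mp (H.edge_vert hab),
          (hmem b).mp (H.edge_vert hab.symm)⟩
  rw [subCount, Nat.card_congr (Equiv.ofBijective f ⟨hinj, hsurj⟩).symm]

lemma clique_iff_degree (x : SimpleGraph V) [DecidableRel x.Adj] (v : V) :
    (∀ a b, a ≠ v → b ≠ v → a ≠ b → x.Adj a b) ↔ xᶜ.degree v = xᶜ.edgeFinset.card := by
  classical
  have hsub : xᶜ.incidenceFinset v ⊆ xᶜ.edgeFinset := by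
    intro e he
    rw [mem_incidenceFinset] at he
    rw [mem_edgeFinset]
    exact xᶜ.incidenceSet_subset v he
  constructor
  · intro hP
    rw [← card_incidenceFinset_eq_degree]
    congr 1
    apply Finset.Subset.antisymm hsub
    intro e
    induction e with
    | h a b =>
      intro he
      rw [mem_edgeFinset, mem_edgeSet, compl_adj] at he
      rw [mem_incidenceFinset]
      refine ⟨by rw [mem_edgeSet, compl_adj]; exact he, ?_⟩
      by_contra hv
      rw [Sym2.mem_iff] at hv
      push_neg at hv
      exact he.2 (hP a b (fun h => hv.1 h.symm) (fun h => hv.2 h.symm) he.1)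
  · intro hd
    have heq : xᶜ.incidenceFinset v = xᶜ.edgeFinset := by
      apply Finset.eq_of_subset_of_card_le hsub
      rw [card_incidenceFinset_eq_degree, hd]
    intro a b ha hb hab
    by_contra hadj
    have hmem : s(a, b) ∈ xᶜ.edgeFinset := by
      rw [mem_edgeFinset, mem_edgeSet, compl_adj]
      exact ⟨hab, hadj⟩
    rw [← heq, mem_incidenceFinset] at hmem
    have h := hmem.2
    rw [Sym2.mem_iff] at h
    rcases h with h | h
    · exact ha h.symm
    · exact hb h.symm

end Aux


/-- If `|N| = n ≥ 2` and `x`, `y` are simple graphs on `N` with identical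
degree distributions, then they contain the same number of subgraphs isomorphic to the
complete graph `K_{n−1}`. -/
theorem stmt6 {V : Type*} [Fintype V] [DecidableEq V] (hn : 2 ≤ Fintype.card V)
    (x y : SimpleGraph V) (hdeg : ∀ j : ℕ, nDeg x j = nDeg y j) :
    subCount (⊤ : SimpleGraph (Fin (Fintype.card V - 1))) x
      = subCount (⊤ : SimpleGraph (Fin (Fintype.card V - 1))) y := by
  classical
  set n := Fintype.card V with hnn
  have hfil : ∀ j : ℕ, (univ.filter (fun v => x.degree v = j)).card
      = (univ.filter (fun v => y.degree v = j)).card := by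
    intro j
    rw [← nDeg_eq, ← nDeg_eq, hdeg]
  have hsum : ∑ v, x.degree v = ∑ v, y.degree v := by
    have hx : ∑ v, x.degree v =
        ∑ j ∈ range n, ∑ v ∈ univ.filter (fun v => x.degree v = j), x.degree v :=
      (Finset.sum_fiberwise_of_maps_to (fun v _ => mem_range.mpr (x.degree_lt_card_verts v)) _).symm
    have hy : ∑ v, y.degree v =
        ∑ j ∈ range n, ∑ v ∈ univ.filter (fun v => y.degree v = j), y.degree v :=
      (Finset.sum_fiberwise_of_maps_to (fun v _ => mem_range.mpr (y.degree_lt_card_verts v)) _).symm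
    rw [hx, hy]
    apply Finset.sum_congr rfl
    intro j _
    rw [Finset.sum_congr rfl (fun v hv => (mem_filter.mp hv).2),
        Finset.sum_congr rfl (fun v hv => (mem_filter.mp hv).2),
        Finset.sum_const, Finset.sum_const, hfil j]
  -- complement degree identity
  have hcx : ∀ v : V, xᶜ.degree v + x.degree v = n - 1 := by
    intro v
    have h1 := x.degree_compl v
    have h2 := x.degree_lt_card_verts v
    omega
  have hcy : ∀ v : V, yᶜ.degree v + y.degree v = n - 1 := by
    intro v
    have h1 := y.degree_compl v
    have h2 := y.degree_lt_card_verts v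
    omega
  have hD : xᶜ.edgeFinset.card = yᶜ.edgeFinset.card := by
    have hx2 : 2 * xᶜ.edgeFinset.card + ∑ v, x.degree v = ∑ v : V, (n - 1) := by
      rw [← sum_degrees_eq_twice_card_edges, ← Finset.sum_add_distrib]
      exact Finset.sum_congr rfl fun v _ => hcx v
    have hy2 : 2 * yᶜ.edgeFinset.card + ∑ v, y.degree v = ∑ v : V, (n - 1) := by
      rw [← sum_degrees_eq_twice_card_edges, ← Finset.sum_add_distrib]
      exact Finset.sum_congr rfl fun v _ => hcy v
    omega
  set D := xᶜ.edgeFinset.card with hDdef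
  rw [subCount_eq hn x, subCount_eq hn y]
  have key : ∀ (z : SimpleGraph V) (hz : DecidableRel z.Adj)
      (_ : ∀ v : V, zᶜ.degree v + z.degree v = n - 1),
      Nat.card {v : V // ∀ a b, a ≠ v → b ≠ v → a ≠ b → z.Adj a b}
        = (univ.filter (fun v => z.degree v + zᶜ.edgeFinset.card = n - 1)).card := by
    intro z hz hcz
    rw [Nat.card_congr (Equiv.subtypeEquivRight
      (q := fun v => z.degree v + zᶜ.edgeFinset.card = n - 1) (fun v => by
        rw [clique_iff_degree]
        have := hcz v
        omega)), Nat.card_eq_fintype_card, Fintype.card_subtype]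
  rw [key x inferInstance hcx, key y inferInstance hcy, ← hDdef, ← hD]
  by_cases hle : D ≤ n - 1
  · rw [Finset.filter_congr (fun v (_ : v ∈ univ) =>
        (show (x.degree v + D = n - 1) ↔ (x.degree v = n - 1 - D) by omega)),
      Finset.filter_congr (fun v (_ : v ∈ univ) =>
        (show (y.degree v + D = n - 1) ↔ (y.degree v = n - 1 - D) by omega)),
      hfil]
  · rw [Finset.filter_eq_empty_iff.mpr (fun v _ => by omega),
      Finset.filter_eq_empty_iff.mpr (fun v _ => by omega)]
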